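/- On the grid graph of dimensions d∈(ℕ*)^D, the transformation ψ defined by ψ(v) = v + e_i when v + e_i is in the grid and ψ(v) = ⊥ otherwise is a translation (EC and SNP), and its loss equals the product of d[j] over all j ≠ i. -/

import Mathlib

open Finset


def IsTransformation {V : Type*} (φ : V → Option V) : Prop :=
  ∀ v1 v2 w : V, φ v1 = some w → φ v2 = some w → v1 = v2

def IsEC {V : Type*} (G : SimpleGraph V) (φ : V → Option V) : Prop :=
  ∀ v w : V, φ v = some w → G.Adj v w

def IsSNP {V : Type*} (G : SimpleGraph V) (φ : V → Option V) : Prop :=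
  ∀ v1 v2 w1 w2 : V, φ v1 = some w1 → φ v2 = some w2 → (G.Adj v1 v2 ↔ G.Adj w1 w2)

def IsTranslation {V : Type*} (G : SimpleGraph V) (φ : V → Option V) : Prop :=
  IsTransformation φ ∧ IsEC G φ ∧ IsSNP G φ

def loss {V : Type*} [Fintype V] [DecidableEq V] (φ : V → Option V) : ℕ :=
  (Finset.univ.filter (fun v => φ v = none)).card

def Prec {V : Type*} [Fintype V] [DecidableEq V] (φ1 φ2 : V → Option V) : Prop :=
  loss φ2 < loss φ1 ∧ ∃ v w : V, φ1 v = some w ∧ φ2 v = some w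

def IsMinimalTranslation {V : Type*} [Fintype V] [DecidableEq V]
    (G : SimpleGraph V) (φ : V → Option V) : Prop :=
  IsTranslation G φ ∧ ∀ φ2 : V → Option V, IsTranslation G φ2 → ¬ Prec φ φ2

def gridGraph (D : ℕ) (d : Fin D → ℕ) : SimpleGraph (∀ i, Fin (d i)) :=
  SimpleGraph.fromRel (fun v w =>
    ∃ i, ((w i : ℕ) = (v i : ℕ) + 1 ∧ ∀ j, j ≠ i → w j = v j))


-- auxiliary: translation preserves the relation
lemma aux_rel {D : ℕ} {d : Fin D → ℕ} {i : Fin D}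
    {v1 v2 w1 w2 : ∀ k, Fin (d k)}
    (h1 : (w1 i : ℕ) = (v1 i : ℕ) + 1 ∧ ∀ j, j ≠ i → w1 j = v1 j)
    (h2 : (w2 i : ℕ) = (v2 i : ℕ) + 1 ∧ ∀ j, j ≠ i → w2 j = v2 j)
    (h : ∃ k, ((v2 k : ℕ) = (v1 k : ℕ) + 1 ∧ ∀ j, j ≠ k → v2 j = v1 j)) :
    ∃ k, ((w2 k : ℕ) = (w1 k : ℕ) + 1 ∧ ∀ j, j ≠ k → w2 j = w1 j) := by
  obtain ⟨k, hk, hkeq⟩ := h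
  refine ⟨k, ?_, ?_⟩
  · by_cases hki : k = i
    · subst hki; rw [h2.1, h1.1, hk]
    · rw [h2.2 k hki, h1.2 k hki]; exact hk
  · intro j hjk
    by_cases hji : j = i
    · subst hji
      have hik : j ≠ k := hjk
      have : v2 j = v1 j := hkeq j hjk
      apply Fin.ext
      rw [h2.1, h1.1, this]
    · rw [h2.2 j hji, h1.2 j hji]; exact hkeq j hjk

lemma aux_rel' {D : ℕ} {d : Fin D → ℕ} {i : Fin D}
    {v1 v2 w1 w2 : ∀ k, Fin (d k)}
    (h1 : (w1 i : ℕ) = (v1 i : ℕ) + 1 ∧ ∀ j, j ≠ i → w1 j = v1 j)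
    (h2 : (w2 i : ℕ) = (v2 i : ℕ) + 1 ∧ ∀ j, j ≠ i → w2 j = v2 j)
    (h : ∃ k, ((w2 k : ℕ) = (w1 k : ℕ) + 1 ∧ ∀ j, j ≠ k → w2 j = w1 j)) :
    ∃ k, ((v2 k : ℕ) = (v1 k : ℕ) + 1 ∧ ∀ j, j ≠ k → v2 j = v1 j) := by
  obtain ⟨k, hk, hkeq⟩ := h
  refine ⟨k, ?_, ?_⟩
  · by_cases hki : k = i
    · subst hki
      have := hk
      rw [h2.1, h1.1] at this
      omega
    · rw [← h2.2 k hki, ← h1.2 k hki]; exact hk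
  · intro j hjk
    by_cases hji : j = i
    · subst hji
      have : w2 j = w1 j := hkeq j hjk
      apply Fin.ext
      have := congrArg Fin.val this
      rw [h2.1, h1.1] at this
      omega
    · rw [← h2.2 j hji, ← h1.2 j hji]; exact hkeq j hjk

theorem stmt_17 (D : ℕ) (d : Fin D → ℕ) (hd : ∀ j, 1 ≤ d j) (i : Fin D)
    (ψ : (∀ k, Fin (d k)) → Option (∀ k, Fin (d k)))
    (hψ : ∀ v w, ψ v = some w ↔
      ((w i : ℕ) = (v i : ℕ) + 1 ∧ ∀ j, j ≠ i → w j = v j)) :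
    IsTranslation (gridGraph D d) ψ ∧
      loss ψ = ∏ j ∈ Finset.univ.erase i, d j := by
  have hinj : IsTransformation ψ := by
    intro v1 v2 w hv1 hv2
    rw [hψ] at hv1 hv2
    funext j
    by_cases hji : j = i
    · subst hji
      apply Fin.ext
      have := hv1.1
      have := hv2.1
      omega
    · rw [← hv1.2 j hji, ← hv2.2 j hji]
  constructor
  · refine ⟨hinj, ?_, ?_⟩
    · -- EC
      intro v w hvw
      rw [hψ] at hvw
      rw [gridGraph, SimpleGraph.fromRel_adj]
      refine ⟨?_, Or.inl ⟨i, hvw.1, hvw.2⟩⟩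
      intro hvw'
      have := hvw.1
      rw [hvw'] at this
      omega
    · -- SNP
      intro v1 v2 w1 w2 hv1 hv2
      rw [hψ] at hv1 hv2
      rw [gridGraph, SimpleGraph.fromRel_adj, SimpleGraph.fromRel_adj]
      constructor
      · rintro ⟨hne, h | h⟩
        · refine ⟨?_, Or.inl (aux_rel hv1 hv2 h)⟩
          intro he
          apply hne
          exact hinj v1 v2 w1 ((hψ v1 w1).2 hv1) (he ▸ (hψ v2 w2).2 hv2)
        · refine ⟨?_, Or.inr (aux_rel hv2 hv1 h)⟩
          intro he
          apply hne
          exact hinj v1 v2 w1 ((hψ v1 w1).2 hv1) (he ▸ (hψ v2 w2).2 hv2)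
      · rintro ⟨hne, h | h⟩
        · refine ⟨?_, Or.inl (aux_rel' hv1 hv2 h)⟩
          rintro rfl
          apply hne
          have := ((hψ v1 w1).2 hv1)
          have := ((hψ v1 w2).2 hv2)
          have : some w1 = some w2 := by rw [← ‹ψ v1 = some w1›, ‹ψ v1 = some w2›]
          exact Option.some.inj this
        · refine ⟨?_, Or.inr (aux_rel' hv2 hv1 h)⟩
          rintro rfl
          apply hne
          have := ((hψ v1 w1).2 hv1)
          have := ((hψ v1 w2).2 hv2)
          have : some w1 = some w2 := by rw [← ‹ψ v1 = some w1›, ‹ψ v1 = some w2›]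
          exact Option.some.inj this
  · -- loss
    have hc : (d i - 1) < d i := by have := hd i; omega
    set c : Fin (d i) := ⟨d i - 1, hc⟩ with hcdef
    have key : ∀ v : ∀ k, Fin (d k), ψ v = none ↔ v i = c := by
      intro v
      constructor
      · intro hv
        by_contra hne
        have hvi : (v i : ℕ) + 1 < d i := by
          have h1 := (v i).isLt
          have h2 : (v i : ℕ) ≠ d i - 1 := fun h => hne (Fin.ext h)
          have := hd i
          omega
        have : ψ v = some (Function.update v i ⟨(v i : ℕ) + 1, hvi⟩) := by
          rw [hψ]
          constructor
          · simp
          · intro j hji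
            rw [Function.update_of_ne hji]
        rw [hv] at this
        exact (Option.some_ne_none _ this.symm).elim
      · intro hv
        cases hw : ψ v with
        | none => rfl
        | some w =>
          exfalso
          rw [hψ] at hw
          have h1 := hw.1
          have h2 := (w i).isLt
          have h3 : (v i : ℕ) = d i - 1 := congrArg Fin.val hv
          have := hd i
          omega
    unfold loss
    have : (Finset.univ.filter (fun v => ψ v = none)) =
        (Finset.univ.filter (fun v : ∀ k, Fin (d k) => v i = c)) := by
      apply Finset.filter_congr
      intro v _
      simp [key v]
    rw [this]
    have := Fintype.card_filter_piFinset_eq_of_mem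
      (fun j => (Finset.univ : Finset (Fin (d j)))) i (a := c) (Finset.mem_univ c)
    rw [Fintype.piFinset_univ] at this
    rw [this]
    apply Finset.prod_congr rfl
    intro j _
    simp
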